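/- (Theorem A) Let G be a simplicial group, n > 1, D_n ≤ G_n the subgroup generated by all degenerate elements (the images of all s_i : G_{n-1} → G_n), and N_n ≤ G_n the normal closure of all elements F_{α,β}(x,y) = p([s_α x, s_β y]) for (α,β) ∈ P(n), x ∈ NG_{n−#α}, y ∈ NG_{n−#β}, where p = p_{n-1}∘⋯∘p_0 with p_j(z) = z·s_j d_j(z)^{-1}. Then NG_n ∩ D_n = N_n ∩ D_n. -/

import Mathlib

/-- A simplicial group: groups `G n` with face maps `d n i : G (n+1) →* G n`
and degeneracies `s n i : G n →* G (n+1)` satisfying the simplicial identities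
(asserted in the meaningful index ranges). -/
structure SGrp where
  G : ℕ → Type
  grp : ∀ n, Group (G n)
  d : (n : ℕ) → ℕ → (G (n+1) →* G n)
  s : (n : ℕ) → ℕ → (G n →* G (n+1))
  dd : ∀ n i j, i < j → j ≤ n + 2 → ∀ x,
    d n i (d (n+1) j x) = d n (j-1) (d (n+1) i x)
  ds_lt : ∀ n i j, i < j → j ≤ n + 1 → ∀ x,
    d (n+1) i (s (n+1) j x) = s n (j-1) (d n i x)
  ds_eq : ∀ n j, j ≤ n → ∀ x, d n j (s n j x) = x
  ds_succ : ∀ n j, j ≤ n → ∀ x, d n (j+1) (s n j x) = x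
  ds_gt : ∀ n i j, j + 1 < i → i ≤ n + 2 → ∀ x,
    d (n+1) i (s (n+1) j x) = s n j (d n (i-1) x)
  ss : ∀ n i j, i ≤ j → j ≤ n → ∀ x,
    s (n+1) i (s n j x) = s (n+1) (j+1) (s n i x)

attribute [instance] SGrp.grp

/-- Moore complex: `NG 0 = G 0`, `NG (n+1) = ⋂_{i ≤ n} ker (d_i)`. -/
def SGrp.NG (X : SGrp) : (n : ℕ) → Subgroup (X.G n)
  | 0 => ⊤
  | (n+1) => ⨅ i ∈ Finset.range (n+1), (X.d n i).ker

/-- Transport along an equality of dimensions. -/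
def SGrp.castHom (X : SGrp) {a b : ℕ} (h : a = b) : X.G a →* X.G b where
  toFun x := h ▸ x
  map_one' := by subst h; rfl
  map_mul' x y := by subst h; rfl

/-- Composite degeneracy `s_α = s_{i_l} ⋯ s_{i_1}` for `α = [i_l, …, i_1]`
(head applied last). -/
def SGrp.sComp (X : SGrp) : (m : ℕ) → (α : List ℕ) → (X.G m →* X.G (m + α.length))
  | _, [] => MonoidHom.id _
  | m, i :: rest => (X.s (m + rest.length) i).comp (X.sComp m rest)

/-- `s_α : G_{n-#α} →* G_n` for `α ∈ S(n)` (the trivial hom if lengths mismatch). -/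
def SGrp.sMapN (X : SGrp) (n : ℕ) (α : List ℕ) : X.G (n - α.length) →* X.G n :=
  if h : n - α.length + α.length = n then
    (X.castHom h).comp (X.sComp (n - α.length) α) else 1

/-- `p_j(z) = z ⬝ (s_j d_j z)⁻¹` on `G (n+1)`. -/
def SGrp.p (X : SGrp) (n j : ℕ) (z : X.G (n+1)) : X.G (n+1) :=
  z * (X.s n j (X.d n j z))⁻¹

/-- `pComp n j = p_j ∘ ⋯ ∘ p_0` on `G (n+1)`. -/
def SGrp.pComp (X : SGrp) (n : ℕ) : ℕ → X.G (n+1) → X.G (n+1)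
  | 0 => X.p n 0
  | (j+1) => fun z => X.p n (j+1) (X.pComp n j z)

/-- `pComp1 n l = p_l ∘ ⋯ ∘ p_1` on `G (n+1)` (identity for `l = 0`). -/
def SGrp.pComp1 (X : SGrp) (n : ℕ) : ℕ → X.G (n+1) → X.G (n+1)
  | 0 => id
  | (j+1) => fun z => X.p n (j+1) (X.pComp1 n j z)

/-- The ordering of `S(n)` from the paper: `α < β` iff comparing from the
smallest indices (the reversed lists), either the first difference has the
index of `α` larger, or `α`'s indices (from the small end) form a proper
prefix of `β`'s. -/
def Slt (α β : List ℕ) : Prop := List.Lex (· > ·) α.reverse β.reverse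

/-- `α` represents a nonidentity element of `S(N)`: a nonempty strictly
decreasing tuple of indices `< N`. -/
def SIdx (N : ℕ) (α : List ℕ) : Prop :=
  α ≠ [] ∧ α.Chain' (· > ·) ∧ α.length ≤ N ∧ ∀ i ∈ α, i < N

open scoped commutatorElement

namespace ThmA

variable (X : SGrp)

/-! ### cast utilities -/

@[simp] lemma castHom_apply_rfl {a : ℕ} (x : X.G a) : X.castHom rfl x = x := rfl

lemma castHom_castHom {a b c : ℕ} (h : a = b) (h' : b = c) (x : X.G a) :
    X.castHom h' (X.castHom h x) = X.castHom (h.trans h') x := by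
  subst h; subst h'; rfl

lemma sComp_castHom {a b : ℕ} (h : a = b) (α : List ℕ) (x : X.G a) :
    X.sComp b α (X.castHom h x) =
      X.castHom (by rw [h]) (X.sComp a α x) := by
  subst h; rfl

lemma castHom_mem_NG {a b : ℕ} (h : a = b) (x : X.G a) (hx : x ∈ X.NG a) :
    X.castHom h x ∈ X.NG b := by subst h; exact hx

/-! ### `Fc`: face maps with junk value at level 0 -/

def Fc : (q : ℕ) → ℕ → (X.G q →* X.G (q-1))
  | 0, _ => 1
  | (q+1), j => X.d q j

@[simp] lemma Fc_succ (q j : ℕ) : Fc X (q+1) j = X.d q j := rfl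

lemma ng_iff (q : ℕ) (g : X.G q) : g ∈ X.NG q ↔ ∀ j < q, Fc X q j g = 1 := by
  cases q with
  | zero => simp [SGrp.NG]
  | succ q =>
    show g ∈ ⨅ i ∈ Finset.range (q+1), (X.d q i).ker ↔ _
    simp only [Subgroup.mem_iInf, MonoidHom.mem_ker, Finset.mem_range, Fc_succ]

lemma ng_succ_iff (q : ℕ) (g : X.G (q+1)) :
    g ∈ X.NG (q+1) ↔ ∀ j ≤ q, X.d q j g = 1 := by
  rw [ng_iff]
  constructor
  · intro h j hj; exact h j (Nat.lt_succ_of_le hj)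
  · intro h j hj; exact h j (Nat.lt_succ_iff.mp hj)

/-! ### p machinery, at level `q+1` -/

lemma p_face_self (q j : ℕ) (hj : j ≤ q) (z : X.G (q+1)) :
    X.d q j (X.p q j z) = 1 := by
  simp [SGrp.p, X.ds_eq q j hj]

lemma p_face_lt (q i j : ℕ) (hij : i < j) (hj : j ≤ q) (z : X.G (q+1))
    (hz : X.d q i z = 1) : X.d q i (X.p q j z) = 1 := by
  obtain ⟨q, rfl⟩ : ∃ q', q = q' + 1 := ⟨q - 1, by omega⟩
  simp only [SGrp.p, map_mul, map_inv, hz, one_mul]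
  rw [X.ds_lt q i j hij (by omega), X.dd q i j hij (by omega), hz]
  simp

lemma p_fix (q j : ℕ) (z : X.G (q+1)) (hz : X.d q j z = 1) : X.p q j z = z := by
  simp [SGrp.p, hz]

lemma pComp_faces (q j : ℕ) (hj : j ≤ q) (z : X.G (q+1)) :
    ∀ i ≤ j, X.d q i (X.pComp q j z) = 1 := by
  induction j with
  | zero =>
    intro i hi; interval_cases i
    exact p_face_self X q 0 (by omega) z
  | succ j ih =>
    intro i hi
    show X.d q i (X.p q (j+1) (X.pComp q j z)) = 1
    rcases Nat.lt_succ_iff_lt_or_eq.mp (Nat.lt_succ_of_le hi) with h | h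
    · exact p_face_lt X q i (j+1) h hj _ (ih (by omega) i (by omega))
    · subst h; exact p_face_self X q (j+1) hj _

lemma pComp_fix (q j : ℕ) (z : X.G (q+1)) (hz : ∀ i ≤ j, X.d q i z = 1) :
    X.pComp q j z = z := by
  induction j with
  | zero => exact p_fix X q 0 z (hz 0 le_rfl)
  | succ j ih =>
    show X.p q (j+1) (X.pComp q j z) = z
    rw [ih (fun i hi => hz i (le_trans hi (Nat.le_succ j)))]
    exact p_fix X q (j+1) z (hz (j+1) le_rfl)

/-- tail components -/
def cc (q : ℕ) (z : X.G (q+1)) : ℕ → X.G q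
  | 0 => X.d q 0 z
  | (r+1) => X.d q (r+1) (X.pComp q r z)

lemma tail_eq (q : ℕ) (z : X.G (q+1)) :
    ∀ j, z = X.pComp q j z *
      ((List.range (j+1)).reverse.map (fun r => X.s q r (cc X q z r))).prod := by
  intro j
  induction j with
  | zero =>
    show z = X.p q 0 z * _
    simp only [List.range_succ, List.range_zero, List.nil_append, List.reverse_cons,
      List.reverse_nil, List.map_cons, List.map_nil, List.prod_cons, List.prod_nil, mul_one]
    show z = z * (X.s q 0 (X.d q 0 z))⁻¹ * X.s q 0 (X.d q 0 z)
    group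
  | succ j ih =>
    rw [List.range_succ, List.reverse_append]
    simp only [List.reverse_cons, List.reverse_nil, List.nil_append, List.map_cons,
      List.singleton_append, List.prod_cons]
    show z = X.p q (j+1) (X.pComp q j z) * (X.s q (j+1) (cc X q z (j+1)) * _)
    rw [SGrp.p]
    show z = X.pComp q j z * (X.s q (j+1) (X.d q (j+1) (X.pComp q j z)))⁻¹ *
      (X.s q (j+1) (cc X q z (j+1)) * _)
    show z = X.pComp q j z * (X.s q (j+1) (cc X q z (j+1)))⁻¹ *
      (X.s q (j+1) (cc X q z (j+1)) * _)
    rw [mul_assoc, ← mul_assoc (X.s q (j+1) (cc X q z (j+1)))⁻¹, inv_mul_cancel, one_mul]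
    exact ih

lemma cc_lowface (q : ℕ) (z : X.G (q+1)) (r : ℕ) (hr : r ≤ q) :
    ∀ j < r, Fc X q j (cc X q z r) = 1 := by
  intro j hj
  obtain ⟨q, rfl⟩ : ∃ q', q = q' + 1 := ⟨q - 1, by omega⟩
  cases r with
  | zero => omega
  | succ r =>
    show X.d q j (X.d (q+1) (r+1) (X.pComp (q+1) r z)) = 1
    rw [X.dd q j (r+1) hj (by omega)]
    rw [pComp_faces X (q+1) r (by omega) z j (by omega)]
    simp

lemma cc_triv (q : ℕ) (z : X.G (q+1)) (r : ℕ) (hz : ∀ i ≤ r, X.d q i z = 1) :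
    cc X q z r = 1 := by
  cases r with
  | zero => exact hz 0 le_rfl
  | succ r =>
    show X.d q (r+1) (X.pComp q r z) = 1
    rw [pComp_fix X q r z (fun i hi => hz i (le_trans hi (Nat.le_succ r)))]
    exact hz (r+1) le_rfl

end ThmA
namespace ThmA

/-! ### atoms -/

inductive IsAtomL (X : SGrp) : (q : ℕ) → List ℕ → X.G q → Prop
  | base (q j : ℕ) (x : X.G q) : j ≤ q → x ∈ X.NG q → IsAtomL X (q+1) [j] (X.s q j x)
  | step (q j : ℕ) (α : List ℕ) (g : X.G q) :
      IsAtomL X q α g → (∀ i ∈ α, i < j) → j ≤ q → IsAtomL X (q+1) (j::α) (X.s q j g)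

variable (X : SGrp)

lemma atom_ne_nil {q : ℕ} {α : List ℕ} {g : X.G q} (h : IsAtomL X q α g) : α ≠ [] := by
  cases h <;> simp

lemma atom_level_succ {q : ℕ} {α : List ℕ} {g : X.G q} (h : IsAtomL X q α g) :
    ∃ q₀, q = q₀ + 1 := by
  cases h with
  | base q j x h1 h2 => exact ⟨q, rfl⟩
  | step q j α g h1 h2 h3 => exact ⟨q, rfl⟩

lemma atom_entries {q : ℕ} {α : List ℕ} {g : X.G q} (h : IsAtomL X q α g) :
    ∀ i ∈ α, i < q := by
  induction h with
  | base q j x h1 h2 => intro i hi; simp at hi; omega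
  | step q j α g h1 h2 h3 ih =>
    intro i hi
    rcases List.mem_cons.mp hi with rfl | hi
    · omega
    · have := ih i hi; omega

lemma atom_chain {q : ℕ} {α : List ℕ} {g : X.G q} (h : IsAtomL X q α g) :
    α.Chain' (· > ·) := by
  induction h with
  | base q j x h1 h2 => exact List.isChain_singleton j
  | step q j α g h1 h2 h3 ih =>
    exact List.isChain_cons.mpr ⟨fun y hy => h2 y (List.mem_of_mem_head? hy), ih⟩

lemma atom_inv {q : ℕ} {α : List ℕ} {g : X.G q} (h : IsAtomL X q α g) :
    IsAtomL X q α g⁻¹ := by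
  induction h with
  | base q j x h1 h2 =>
    rw [← map_inv]
    exact IsAtomL.base q j x⁻¹ h1 (inv_mem h2)
  | step q j α g h1 h2 h3 ih =>
    rw [← map_inv]
    exact IsAtomL.step q j α g⁻¹ ih h2 h3

/-- atoms whose entries all exceed `r` are killed by `d_r` -/
lemma atom_kill_fc {q : ℕ} {α : List ℕ} {g : X.G q} (h : IsAtomL X q α g)
    {r : ℕ} (hr : ∀ i ∈ α, r < i) : Fc X q r g = 1 := by
  induction h with
  | base q j x h1 h2 =>
    have hrj : r < j := hr j (by simp)
    show X.d q r (X.s q j x) = 1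
    obtain ⟨q₁, rfl⟩ : ∃ q₁, q = q₁ + 1 := ⟨q - 1, by omega⟩
    rw [X.ds_lt q₁ r j hrj (by omega)]
    rw [(ng_succ_iff X q₁ x).mp h2 r (by omega)]
    simp
  | step q j α g h1 h2 h3 ih =>
    have hrj : r < j := hr j (by simp)
    show X.d q r (X.s q j g) = 1
    obtain ⟨q₁, rfl⟩ : ∃ q₁, q = q₁ + 1 := by
      rcases atom_level_succ X h1 with ⟨q₀, rfl⟩; exact ⟨q₀, rfl⟩
    rw [X.ds_lt q₁ r j hrj (by omega)]
    rw [show Fc X (q₁+1) r g = X.d q₁ r g from rfl] at ih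
    rw [ih (fun i hi => hr i (List.mem_cons_of_mem _ hi))]
    simp

lemma atom_kill {q : ℕ} {α : List ℕ} {g : X.G (q+1)} (h : IsAtomL X (q+1) α g)
    {r : ℕ} (hr : ∀ i ∈ α, r < i) : X.d q r g = 1 :=
  atom_kill_fc X h hr

/-- `s`-maps with junk value at level 0 -/
def Sc : (q : ℕ) → ℕ → (X.G (q-1) →* X.G q)
  | 0, _ => 1
  | (q+1), j => X.s q j

/-- atoms with minimal entry `k` satisfy `s_k (d_k g) = g` -/
lemma atom_retract_fc {q : ℕ} {α : List ℕ} {g : X.G q} (h : IsAtomL X q α g)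
    {k : ℕ} (hk : k ∈ α) (hmin : ∀ i ∈ α, k ≤ i) : Sc X q k (Fc X q k g) = g := by
  induction h with
  | base q j x h1 h2 =>
    obtain rfl : k = j := by simpa using hk
    show X.s q k (X.d q k (X.s q k x)) = X.s q k x
    rw [X.ds_eq q k h1]
  | step q j α g h1 h2 h3 ih =>
    have hkj : k ∈ α := by
      rcases List.mem_cons.mp hk with rfl | hk'
      · exfalso
        rcases atom_ne_nil X h1 with _
        obtain ⟨a, ha⟩ : ∃ a, a ∈ α := by
          cases α with
          | nil => exact absurd rfl (atom_ne_nil X h1)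
          | cons a t => exact ⟨a, by simp⟩
        have := h2 a ha; have := hmin a (List.mem_cons_of_mem _ ha); omega
      · exact hk'
    have hkltj : k < j := h2 k hkj
    obtain ⟨q₁, rfl⟩ : ∃ q₁, q = q₁ + 1 := by
      rcases atom_level_succ X h1 with ⟨q₀, rfl⟩; exact ⟨q₀, rfl⟩
    show X.s q₁.succ k (X.d q₁.succ k (X.s q₁.succ j g)) = X.s q₁.succ j g
    rw [X.ds_lt q₁ k j hkltj (by omega)]
    have hss := X.ss q₁ k (j-1) (by omega) (by omega) (X.d q₁ k g)
    rw [hss]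
    have hj1 : j - 1 + 1 = j := by omega
    rw [hj1]
    have ih' := ih hkj (fun i hi => hmin i (List.mem_cons_of_mem _ hi))
    rw [show Sc X (q₁+1) k (Fc X (q₁+1) k g) = X.s q₁ k (X.d q₁ k g) from rfl] at ih'
    rw [ih']

lemma atom_retract {q : ℕ} {α : List ℕ} {g : X.G (q+1)} (h : IsAtomL X (q+1) α g)
    {k : ℕ} (hk : k ∈ α) (hmin : ∀ i ∈ α, k ≤ i) : X.s q k (X.d q k g) = g :=
  atom_retract_fc X h hk hmin

/-! ### insertion -/

def ins (t : ℕ) : List ℕ → List ℕ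
  | [] => [t]
  | (i :: tl) => if i < t then t :: i :: tl else (i+1) :: ins t tl

lemma ins_min {t c : ℕ} : ∀ {γ : List ℕ}, (∀ i ∈ γ, c ≤ i) → c ≤ t →
    ∀ i ∈ ins t γ, c ≤ i := by
  intro γ
  induction γ with
  | nil => intro _ ht i hi; simp only [ins, List.mem_singleton] at hi; omega
  | cons a tl ih =>
    intro hγ ht i hi
    by_cases h : a < t
    · simp only [ins, if_pos h, List.mem_cons] at hi
      rcases hi with h1 | h1 | h1
      · omega
      · have := hγ a (List.mem_cons_self); omega
      · have := hγ i (List.mem_cons_of_mem a h1); omega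
    · simp only [ins, if_neg h, List.mem_cons] at hi
      rcases hi with h1 | h1
      · have := hγ a (List.mem_cons_self); omega
      · have := ih (fun j hj => hγ j (List.mem_cons_of_mem a hj)) ht i h1; omega

lemma ins_lt {t c : ℕ} : ∀ {γ : List ℕ}, (∀ i ∈ γ, i < c) → t ≤ c →
    ∀ i ∈ ins t γ, i < c + 1 := by
  intro γ
  induction γ with
  | nil => intro _ ht i hi; simp only [ins, List.mem_singleton] at hi; omega
  | cons a tl ih =>
    intro hγ ht i hi
    by_cases h : a < t
    · simp only [ins, if_pos h, List.mem_cons] at hi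
      rcases hi with h1 | h1 | h1
      · omega
      · have := hγ a (List.mem_cons_self); omega
      · have := hγ i (List.mem_cons_of_mem a h1); omega
    · simp only [ins, if_neg h, List.mem_cons] at hi
      rcases hi with h1 | h1
      · have := hγ a (List.mem_cons_self); omega
      · have := ih (fun j hj => hγ j (List.mem_cons_of_mem a hj)) ht i h1; omega

lemma atom_wrap {q : ℕ} {α : List ℕ} {a : X.G q} (h : IsAtomL X q α a)
    {t : ℕ} (ht : t ≤ q) : IsAtomL X (q+1) (ins t α) (X.s q t a) := by
  induction h generalizing t with
  | base q j x h1 h2 =>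
    by_cases hjt : j < t
    · show IsAtomL X (q+2) (ins t [j]) (X.s (q+1) t (X.s q j x))
      rw [show ins t [j] = t :: [j] by simp [ins, hjt]]
      exact IsAtomL.step (q+1) t [j] _ (IsAtomL.base q j x h1 h2) (by simpa using hjt) ht
    · have htj : t ≤ j := by omega
      rw [X.ss q t j htj h1]
      rw [show ins t [j] = (j+1) :: [t] by simp [ins]; omega]
      exact IsAtomL.step (q+1) (j+1) [t] _
        (IsAtomL.base q t x (le_trans htj h1) h2) (by simp; omega) (by omega)
  | step q j α g h1 h2 h3 ih =>
    by_cases hjt : j < t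
    · rw [show ins t (j::α) = t :: j :: α by simp [ins, hjt]]
      refine IsAtomL.step (q+1) t (j::α) _ (IsAtomL.step q j α g h1 h2 h3) ?_ ht
      intro i hi
      rcases List.mem_cons.mp hi with rfl | hi
      · exact hjt
      · have := h2 i hi; omega
    · have htj : t ≤ j := by omega
      rw [X.ss q t j htj h3]
      rw [show ins t (j::α) = (j+1) :: ins t α by simp [ins]; omega]
      refine IsAtomL.step (q+1) (j+1) (ins t α) _ (ih (le_trans htj h3)) ?_ (by omega)
      exact ins_lt h2 htj

end ThmA
namespace ThmA

variable (X : SGrp)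

/-! ### strip: removing an entry `t` (entries above `t` get decremented) -/

def strip (t : ℕ) : List ℕ → List ℕ
  | [] => []
  | a :: tl => if a = t then strip t tl else (if t < a then a - 1 else a) :: strip t tl

lemma strip_eq_self {t : ℕ} : ∀ {α : List ℕ}, (∀ i ∈ α, i < t) → strip t α = α := by
  intro α
  induction α with
  | nil => intro _; rfl
  | cons a tl ih =>
    intro h
    have h1 := h a (List.mem_cons_self)
    simp only [strip, if_neg (by omega : ¬ a = t), if_neg (by omega : ¬ t < a)]
    rw [ih (fun i hi => h i (List.mem_cons_of_mem a hi))]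

lemma strip_cons_self (t : ℕ) (α : List ℕ) (hα : ∀ i ∈ α, i < t) :
    strip t (t :: α) = α := by
  simp only [strip, if_pos rfl]
  exact strip_eq_self hα

lemma strip_cons_gt (t j : ℕ) (α : List ℕ) (hj : t < j) :
    strip t (j :: α) = (j - 1) :: strip t α := by
  simp only [strip, if_neg (by omega : ¬ j = t), if_pos hj]

lemma mem_strip {t i : ℕ} : ∀ {α : List ℕ}, i ∈ strip t α →
    ∃ a, a ∈ α ∧ a ≠ t ∧ i = (if t < a then a - 1 else a) := by
  intro α
  induction α with
  | nil => intro h; simp [strip] at h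
  | cons a tl ih =>
    intro h
    by_cases ha : a = t
    · simp only [strip, if_pos ha] at h
      obtain ⟨b, hb, hbt, rfl⟩ := ih h
      exact ⟨b, List.mem_cons_of_mem a hb, hbt, rfl⟩
    · simp only [strip, if_neg ha, List.mem_cons] at h
      rcases h with h | h
      · exact ⟨a, List.mem_cons_self, ha, h⟩
      · obtain ⟨b, hb, hbt, rfl⟩ := ih h
        exact ⟨b, List.mem_cons_of_mem a hb, hbt, rfl⟩

lemma strip_mem_of_lt {t k : ℕ} : ∀ {α : List ℕ}, k ∈ α → k < t → k ∈ strip t α := by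
  intro α
  induction α with
  | nil => intro h _; simp at h
  | cons a tl ih =>
    intro h hkt
    rcases List.mem_cons.mp h with h1 | h1
    · subst h1
      simp only [strip, if_neg (by omega : ¬ k = t), if_neg (by omega : ¬ t < k)]
      exact List.mem_cons_self
    · by_cases ha : a = t
      · simp only [strip, if_pos ha]; exact ih h1 hkt
      · simp only [strip, if_neg ha]
        exact List.mem_cons_of_mem _ (ih h1 hkt)

lemma strip_bound {t c : ℕ} {α : List ℕ} (hα : ∀ i ∈ α, c ≤ i) (hct : c ≤ t) :
    ∀ i ∈ strip t α, c ≤ i := by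
  intro i hi
  obtain ⟨a, ha, hat, rfl⟩ := mem_strip hi
  have := hα a ha
  by_cases h : t < a <;> simp [h] <;> omega

lemma strip_lt {t c : ℕ} {α : List ℕ} (hα : ∀ i ∈ α, i < c) :
    ∀ i ∈ strip t α, i < c := by
  intro i hi
  obtain ⟨a, ha, hat, rfl⟩ := mem_strip hi
  have := hα a ha
  by_cases h : t < a <;> simp [h] <;> omega

lemma strip_lt_of_lt {t c : ℕ} {α : List ℕ} (hα : ∀ i ∈ α, i < c) (htc : t < c) :
    ∀ i ∈ strip t α, i < c - 1 ∨ i < t := by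
  intro i hi
  obtain ⟨a, ha, hat, rfl⟩ := mem_strip hi
  have := hα a ha
  by_cases h : t < a <;> simp [h] <;> omega

lemma strip_length {t : ℕ} : ∀ {α : List ℕ}, α.Nodup → t ∈ α →
    (strip t α).length + 1 = α.length := by
  intro α
  induction α with
  | nil => intro _ h; simp at h
  | cons a tl ih =>
    intro hnd ht
    by_cases ha : a = t
    · subst ha
      have hnt : a ∉ tl := (List.nodup_cons.mp hnd).1
      simp only [strip, if_pos rfl, List.length_cons]
      have hlen : ∀ (tl2 : List ℕ), a ∉ tl2 → (strip a tl2).length = tl2.length := by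
        intro tl2
        induction tl2 with
        | nil => intro _; rfl
        | cons b tl3 ih3 =>
          intro hb
          have hb1 : b ≠ a := fun h => hb (h ▸ List.mem_cons_self)
          have hb2 : a ∉ tl3 := fun h => hb (List.mem_cons_of_mem b h)
          simp only [strip, if_neg hb1, List.length_cons, ih3 hb2]
      rw [if_pos trivial, hlen tl hnt]
    · have ht' : t ∈ tl := by
        rcases List.mem_cons.mp ht with h | h
        · exact absurd h.symm ha
        · exact h
      simp only [strip, if_neg ha, List.length_cons]
      rw [← ih (List.nodup_cons.mp hnd).2 ht']

lemma atom_nodup {q : ℕ} {α : List ℕ} {g : X.G q} (h : IsAtomL X q α g) : α.Nodup := by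
  have hc := atom_chain X h
  have hp : α.Pairwise (· > ·) := List.isChain_iff_pairwise.mp hc
  exact hp.imp (fun h => by omega)

/-- pulling a common entry `t` to the outside -/
lemma atom_pull_fc {q : ℕ} {α : List ℕ} {g : X.G q} (h : IsAtomL X q α g)
    {t : ℕ} (ht : t ∈ α) :
    ∃ g' : X.G (q-1), ((IsAtomL X (q-1) (strip t α) g') ∨
      (strip t α = [] ∧ g' ∈ X.NG (q-1))) ∧ g = Sc X q t g' := by
  induction h with
  | base q j x h1 h2 =>
    obtain rfl : t = j := by simpa using ht
    exact ⟨x, Or.inr ⟨by simp [strip], h2⟩, rfl⟩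
  | step q j α g h1 h2 h3 ih =>
    rcases List.mem_cons.mp ht with rfl | ht'
    · refine ⟨g, Or.inl ?_, rfl⟩
      rw [strip_cons_self t α h2]
      exact h1
    · have htj : t < j := h2 t ht'
      obtain ⟨q₁, rfl⟩ : ∃ q₁, q = q₁ + 1 := atom_level_succ X h1
      obtain ⟨g₁, hg₁, hge⟩ := ih ht'
      rw [show Sc X (q₁+1) t g₁ = X.s q₁ t g₁ from rfl] at hge
      subst hge
      have hss : X.s (q₁+1) j (X.s q₁ t g₁) = X.s (q₁+1) t (X.s q₁ (j-1) g₁) := by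
        have := X.ss q₁ t (j-1) (by omega) (by omega) g₁
        rw [this, show j - 1 + 1 = j by omega]
      rw [hss]
      refine ⟨X.s q₁ (j-1) g₁, Or.inl ?_, rfl⟩
      rw [strip_cons_gt t j α htj]
      rcases hg₁ with hg₁ | ⟨hemp, hng⟩
      · refine IsAtomL.step q₁ (j-1) (strip t α) g₁ hg₁ ?_ (by omega)
        intro i hi
        rcases strip_lt_of_lt h2 htj i hi with h5 | h5 <;> omega
      · rw [hemp]
        exact IsAtomL.base q₁ (j-1) g₁ (by omega) hng

lemma atom_pull {q : ℕ} {α : List ℕ} {g : X.G (q+1)} (h : IsAtomL X (q+1) α g)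
    {t : ℕ} (ht : t ∈ α) :
    ∃ g' : X.G q, ((IsAtomL X q (strip t α) g') ∨
      (strip t α = [] ∧ g' ∈ X.NG q)) ∧ g = X.s q t g' :=
  atom_pull_fc X h ht

end ThmA
namespace ThmA

variable (X : SGrp)

/-- Carrasco–Cegarra style decomposition: an element of `G q` whose faces
`d_j`, `j < r`, all vanish is a product of elements of `NG q` and atoms with
entries `≥ r`. -/
lemma decompM : ∀ q r (g : X.G q), (∀ j, j < r → Fc X q j g = 1) →
    ∃ L : List (X.G q),
      (∀ a ∈ L, a ∈ X.NG q ∨ ∃ γ, (∀ i ∈ γ, r ≤ i) ∧ IsAtomL X q γ a) ∧ g = L.prod := by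
  intro q
  induction q with
  | zero =>
    intro r g _
    refine ⟨[g], ?_, by simp⟩
    intro a ha
    simp at ha
    subst ha
    left
    show a ∈ (⊤ : Subgroup (X.G 0))
    trivial
  | succ q ihq =>
    intro r z hz
    have tail := tail_eq X q z q
    have key : ∀ T' : List ℕ, (∀ r' ∈ T', r' ≤ q) →
        ∃ L : List (X.G (q+1)),
          (∀ a ∈ L, a ∈ X.NG (q+1) ∨ ∃ γ, (∀ i ∈ γ, r ≤ i) ∧ IsAtomL X (q+1) γ a) ∧
          (T'.map (fun r' => X.s q r' (cc X q z r'))).prod = L.prod := by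
      intro T'
      induction T' with
      | nil => exact fun _ => ⟨[], by simp, by simp⟩
      | cons r' T₁ ihT =>
        intro hT
        obtain ⟨L₁, hL₁, hL₁e⟩ := ihT (fun x hx => hT x (List.mem_cons_of_mem _ hx))
        have hr'q : r' ≤ q := hT r' (List.mem_cons_self)
        by_cases hr' : r' < r
        · -- the component vanishes
          have hcc : cc X q z r' = 1 := by
            apply cc_triv
            intro i hi
            exact hz i (by omega)
          refine ⟨L₁, hL₁, ?_⟩
          rw [List.map_cons, List.prod_cons, hcc, map_one, one_mul, hL₁e]
        · -- decompose the component at level q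
          obtain ⟨L₂, hL₂, hL₂e⟩ := ihq r' (cc X q z r') (cc_lowface X q z r' hr'q)
          refine ⟨L₂.map (X.s q r') ++ L₁, ?_, ?_⟩
          · intro a ha
            rcases List.mem_append.mp ha with ha | ha
            · obtain ⟨b, hb, rfl⟩ := List.mem_map.mp ha
              rcases hL₂ b hb with hb' | ⟨γ, hγ1, hγ2⟩
              · right
                exact ⟨[r'], by intro i hi; simp at hi; omega,
                  IsAtomL.base q r' b hr'q hb'⟩
              · right
                refine ⟨ins r' γ, ?_, atom_wrap X hγ2 hr'q⟩
                exact ins_min (fun i hi => le_trans (by omega) (hγ1 i hi)) (by omega)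
            · exact hL₁ a ha
          · rw [List.map_cons, List.prod_cons, hL₁e, List.prod_append, hL₂e,
              ← MonoidHom.map_list_prod]
    obtain ⟨L', hL', hL'e⟩ := key (List.range (q+1)).reverse
      (fun x hx => by rw [List.mem_reverse, List.mem_range] at hx; omega)
    refine ⟨X.pComp q q z :: L', ?_, ?_⟩
    · intro a ha
      rcases List.mem_cons.mp ha with rfl | ha
      · left
        rw [ng_succ_iff]
        exact fun j hj => pComp_faces X q q le_rfl z j hj
      · exact hL' a ha
    · rw [List.prod_cons, ← hL'e]
      exact tail

end ThmA
namespace ThmA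

variable (X : SGrp)

lemma comm_ng {q : ℕ} (u : X.G q) {v : X.G q} (hv : v ∈ X.NG q) :
    ⁅u, v⁆ ∈ X.NG q := by
  rw [ng_iff] at hv ⊢
  intro j hj
  rw [map_commutatorElement, hv j hj]
  simp

lemma rev_min {k : ℕ} : ∀ (α : List ℕ), α.Chain' (· > ·) → k ∈ α →
    (∀ i ∈ α, k ≤ i) → ∃ r, α.reverse = k :: r := by
  intro α
  induction α with
  | nil => intro _ hk; simp at hk
  | cons a tl ih =>
    intro hc hk hmin
    cases tl with
    | nil =>
      obtain rfl : k = a := by simpa using hk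
      exact ⟨[], by simp⟩
    | cons b tl2 =>
      have hab : a > b := (List.isChain_cons_cons.mp hc).1
      have hk' : k ∈ b :: tl2 := by
        rcases List.mem_cons.mp hk with rfl | hk'
        · have := hmin b (by simp); omega
        · exact hk'
      obtain ⟨r, hr⟩ := ih (List.isChain_cons_cons.mp hc).2 hk'
        (fun i hi => hmin i (List.mem_cons_of_mem _ hi))
      refine ⟨r ++ [a], ?_⟩
      rw [List.reverse_cons, hr]
      rfl

lemma slt_of_min {k : ℕ} {α β : List ℕ} (hc : α.Chain' (· > ·)) (hk : k ∈ α)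
    (hmin : ∀ i ∈ α, k ≤ i) (hβ : β ≠ []) (hβk : ∀ i ∈ β, k+1 ≤ i) : Slt β α := by
  obtain ⟨r, hr⟩ := rev_min α hc hk hmin
  obtain ⟨e, r', hr'⟩ : ∃ e r', β.reverse = e :: r' := by
    cases hb : β.reverse with
    | nil => exact absurd (by simpa using hb) hβ
    | cons e r' => exact ⟨e, r', rfl⟩
  have he : e ∈ β := by
    have : e ∈ β.reverse := by rw [hr']; exact List.mem_cons_self
    rwa [List.mem_reverse] at this
  unfold Slt
  rw [hr, hr']
  exact List.Lex.rel (by have := hβk e he; omega)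

/-- Peiffer generator shapes at level `q+1` -/
def PGen (q : ℕ) (a : X.G (q+1)) : Prop :=
  ∃ (α β : List ℕ) (g h : X.G (q+1)), IsAtomL X (q+1) α g ∧ IsAtomL X (q+1) β h ∧
    (∀ i ∈ α, i ∉ β) ∧ Slt β α ∧
    (a = X.pComp q q ⁅g, h⁆ ∨ a = (X.pComp q q ⁅g, h⁆)⁻¹)

lemma pGen_ng {q : ℕ} {a : X.G (q+1)} (ha : PGen X q a) : a ∈ X.NG (q+1) := by
  obtain ⟨α, β, g, h, _, _, _, _, he⟩ := ha
  have hm : X.pComp q q ⁅g, h⁆ ∈ X.NG (q+1) := by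
    rw [ng_succ_iff]
    exact fun j hj => pComp_faces X q q le_rfl _ j hj
  rcases he with rfl | rfl
  · exact hm
  · exact inv_mem hm

/-- The key commutator decomposition: the commutator of two atoms with
distinct minimal entries (the smaller being `k`) is a product of atoms with
entries `≥ k+1` and of Peiffer generator shapes. -/
lemma CI : ∀ b q k (α β : List ℕ) (g h : X.G (q+1)),
    α.length + β.length ≤ b →
    IsAtomL X (q+1) α g → IsAtomL X (q+1) β h →
    k ∈ α → (∀ i ∈ α, k ≤ i) → (∀ i ∈ β, k+1 ≤ i) →
    ∃ L : List (X.G (q+1)),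
      (∀ a ∈ L, (∃ γ, (∀ i ∈ γ, k+1 ≤ i) ∧ IsAtomL X (q+1) γ a) ∨ PGen X q a) ∧
      ⁅g, h⁆ = L.prod := by
  intro b
  induction b with
  | zero =>
    intro q k α β g h hb hg hh hk hα hβ
    exfalso
    have h1 : α ≠ [] := atom_ne_nil X hg
    have h2 : α.length ≠ 0 := fun h => h1 (List.length_eq_zero_iff.mp h)
    omega
  | succ b ihb =>
    intro q k α β g h hb hg hh hk hα hβ
    by_cases hshared : ∃ t, t ∈ α ∧ t ∈ β
    · -- shared entry: pull it out and recurse at a lower level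
      obtain ⟨t, htα, htβ⟩ := hshared
      have htk1 : k + 1 ≤ t := hβ t htβ
      have htq : t ≤ q := by have := atom_entries X hh t htβ; omega
      obtain ⟨g₁, hg₁, rfl⟩ := atom_pull X hg htα
      obtain ⟨h₁, hh₁, rfl⟩ := atom_pull X hh htβ
      have hcomm : ⁅X.s q t g₁, X.s q t h₁⁆ = X.s q t ⁅g₁, h₁⁆ :=
        (map_commutatorElement (X.s q t) g₁ h₁).symm
      have hg₁' : IsAtomL X q (strip t α) g₁ := by
        rcases hg₁ with hg₁ | ⟨hemp, _⟩
        · exact hg₁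
        · exfalso
          have : k ∈ strip t α := strip_mem_of_lt hk (by omega)
          rw [hemp] at this
          simp at this
      have hkα' : k ∈ strip t α := strip_mem_of_lt hk (by omega)
      rcases hh₁ with hh₁ | ⟨hemp, hng⟩
      · -- both sides remain atoms
        obtain ⟨q₁, rfl⟩ : ∃ q₁, q = q₁ + 1 := atom_level_succ X hg₁'
        obtain ⟨L₁, hL₁, hL₁e⟩ := ihb q₁ k (strip t α) (strip t β) g₁ h₁
          (by
            have e1 := strip_length (atom_nodup X hg) htα
            have e2 := strip_length (atom_nodup X hh) htβ
            omega)
          hg₁' hh₁ hkα'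
          (strip_bound hα (by omega))
          (strip_bound hβ (by omega))
        refine ⟨L₁.map (X.s (q₁+1) t), ?_, ?_⟩
        · intro a ha
          obtain ⟨b', hb', rfl⟩ := List.mem_map.mp ha
          left
          rcases hL₁ b' hb' with ⟨γ, hγ1, hγ2⟩ | hpg
          · exact ⟨ins t γ, ins_min hγ1 htk1, atom_wrap X hγ2 htq⟩
          · exact ⟨[t], by intro i hi; simp at hi; omega,
              IsAtomL.base (q₁+1) t b' htq (pGen_ng X hpg)⟩
        · rw [hcomm, hL₁e, ← MonoidHom.map_list_prod]
      · -- the second side became an `NG` element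
        have hw : ⁅g₁, h₁⁆ ∈ X.NG q := comm_ng X g₁ hng
        refine ⟨[X.s q t ⁅g₁, h₁⁆], ?_, by rw [hcomm]; simp⟩
        intro a ha
        simp only [List.mem_singleton] at ha
        subst ha
        left
        exact ⟨[t], by intro i hi; simp at hi; omega,
          IsAtomL.base q t _ htq hw⟩
    · -- disjoint: Peiffer generator plus atoms from the tail
      push_neg at hshared
      set z := ⁅g, h⁆ with hzdef
      have hfz : ∀ i ≤ k, X.d q i z = 1 := by
        intro i hi
        rw [hzdef, map_commutatorElement]
        rcases Nat.lt_or_ge i k with h1 | h1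
        · rw [atom_kill X hg (fun j hj => by have := hα j hj; omega)]
          simp
        · obtain rfl : i = k := by omega
          rw [atom_kill X hh (fun j hj => by have := hβ j hj; omega)]
          simp
      have tail := tail_eq X q z q
      have key : ∀ T' : List ℕ, (∀ r' ∈ T', r' ≤ q) →
          ∃ L : List (X.G (q+1)),
            (∀ a ∈ L, (∃ γ, (∀ i ∈ γ, k+1 ≤ i) ∧ IsAtomL X (q+1) γ a) ∨ PGen X q a) ∧
            (T'.map (fun r' => X.s q r' (cc X q z r'))).prod = L.prod := by
        intro T'
        induction T' with
        | nil => exact fun _ => ⟨[], by simp, by simp⟩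
        | cons r' T₁ ihT =>
          intro hT
          obtain ⟨L₁, hL₁, hL₁e⟩ := ihT (fun x hx => hT x (List.mem_cons_of_mem _ hx))
          have hr'q : r' ≤ q := hT r' (List.mem_cons_self)
          by_cases hr' : r' ≤ k
          · have hcc : cc X q z r' = 1 := cc_triv X q z r' (fun i hi => hfz i (by omega))
            refine ⟨L₁, hL₁, ?_⟩
            rw [List.map_cons, List.prod_cons, hcc, map_one, one_mul, hL₁e]
          · obtain ⟨L₂, hL₂, hL₂e⟩ := decompM X q r' (cc X q z r') (cc_lowface X q z r' hr'q)
            refine ⟨L₂.map (X.s q r') ++ L₁, ?_, ?_⟩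
            · intro a ha
              rcases List.mem_append.mp ha with ha | ha
              · obtain ⟨b', hb', rfl⟩ := List.mem_map.mp ha
                left
                rcases hL₂ b' hb' with hb'' | ⟨γ, hγ1, hγ2⟩
                · exact ⟨[r'], by intro i hi; simp at hi; omega,
                    IsAtomL.base q r' b' hr'q hb''⟩
                · exact ⟨ins r' γ, ins_min (fun i hi => le_trans (by omega) (hγ1 i hi))
                    (by omega), atom_wrap X hγ2 hr'q⟩
              · exact hL₁ a ha
            · rw [List.map_cons, List.prod_cons, hL₁e, List.prod_append, hL₂e,
                ← MonoidHom.map_list_prod]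
      obtain ⟨L', hL', hL'e⟩ := key (List.range (q+1)).reverse
        (fun x hx => by rw [List.mem_reverse, List.mem_range] at hx; omega)
      refine ⟨X.pComp q q z :: L', ?_, ?_⟩
      · intro a ha
        rcases List.mem_cons.mp ha with rfl | ha
        · right
          exact ⟨α, β, g, h, hg, hh, hshared,
            slt_of_min (atom_chain X hg) hk hα (atom_ne_nil X hh) hβ, Or.inl rfl⟩
        · exact hL' a ha
      · rw [List.prod_cons, ← hL'e]
        exact tail

end ThmA
namespace ThmA

variable (X : SGrp) (n : ℕ)

/-- the Peiffer generating set, exactly as in the statement -/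
abbrev NSet : Set (X.G (n+2)) :=
  {g : X.G (n+2) | ∃ (α β : List ℕ) (x : X.G (n+2 - α.length)) (y : X.G (n+2 - β.length)),
    SIdx (n+2) α ∧ SIdx (n+2) β ∧ (∀ i ∈ α, i ∉ β) ∧ Slt β α ∧
    x ∈ X.NG (n+2 - α.length) ∧ y ∈ X.NG (n+2 - β.length) ∧
    g = X.pComp (n+1) (n+1) ⁅X.sMapN (n+2) α x, X.sMapN (n+2) β y⁆}

abbrev NN : Subgroup (X.G (n+2)) := Subgroup.normalClosure (NSet X n)

lemma s_castHom {a b : ℕ} (hab : a = b) (j : ℕ) (x : X.G a) :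
    X.s b j (X.castHom hab x) = X.castHom (by rw [hab]) (X.s a j x) := by
  subst hab; rfl

lemma castHom_irrel {a b : ℕ} (h h' : a = b) (x : X.G a) :
    X.castHom h x = X.castHom h' x := rfl

lemma atom_cast {q : ℕ} {α : List ℕ} {g : X.G q} (h : IsAtomL X q α g) :
    ∃ (p : ℕ) (hp : p + α.length = q) (x : X.G p),
      x ∈ X.NG p ∧ g = X.castHom hp (X.sComp p α x) := by
  induction h with
  | base q j x h1 h2 =>
    refine ⟨q, rfl, x, h2, ?_⟩
    rfl
  | step q j α g h1 h2 h3 ih =>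
    obtain ⟨p, hp, x, hx, rfl⟩ := ih
    refine ⟨p, by simp [List.length_cons]; omega, x, hx, ?_⟩
    rw [s_castHom]
    have : X.sComp p (j :: α) x = X.s (p + α.length) j (X.sComp p α x) := rfl
    subst hp
    rfl

lemma atom_sMapN {α : List ℕ} {g : X.G (n+2)} (h : IsAtomL X (n+2) α g) :
    SIdx (n+2) α ∧ ∃ x : X.G (n+2 - α.length),
      x ∈ X.NG (n+2 - α.length) ∧ g = X.sMapN (n+2) α x := by
  obtain ⟨p, hp, x, hx, rfl⟩ := atom_cast X h
  have hlen : α.length ≤ n + 2 := by omega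
  have hNl : n + 2 - α.length = p := by omega
  constructor
  · exact ⟨atom_ne_nil X h, atom_chain X h, hlen, fun i hi => atom_entries X h i hi⟩
  · refine ⟨X.castHom hNl.symm x, castHom_mem_NG X hNl.symm x hx, ?_⟩
    have hcond : n + 2 - α.length + α.length = n + 2 := by omega
    rw [SGrp.sMapN, dif_pos hcond]
    show X.castHom hp (X.sComp p α x) =
      X.castHom hcond (X.sComp (n + 2 - α.length) α (X.castHom hNl.symm x))
    rw [sComp_castHom]
    rw [castHom_castHom]

lemma pgen_mem_NN {a : X.G (n+2)} (ha : PGen X (n+1) a) : a ∈ NN X n := by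
  obtain ⟨α, β, g, h, hg, hh, hdisj, hslt, he⟩ := ha
  obtain ⟨hSα, x, hx, rfl⟩ := atom_sMapN X n hg
  obtain ⟨hSβ, y, hy, rfl⟩ := atom_sMapN X n hh
  have hmem : X.pComp (n+1) (n+1) ⁅X.sMapN (n+2) α x, X.sMapN (n+2) β y⁆ ∈ NN X n := by
    apply Subgroup.subset_normalClosure
    exact ⟨α, β, x, y, hSα, hSβ, hdisj, hslt, hx, hy, rfl⟩
  rcases he with rfl | rfl
  · exact hmem
  · exact inv_mem hmem

lemma ng_normal (q : ℕ) : (X.NG (q+1)).Normal := by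
  constructor
  intro a ha g
  rw [ng_succ_iff] at ha ⊢
  intro j hj
  rw [map_mul, map_mul, ha j hj, mul_one, map_inv]
  simp

lemma NN_le_NG : NN X n ≤ X.NG (n+2) := by
  have : (X.NG (n+2)).Normal := ng_normal X (n+1)
  apply Subgroup.normalClosure_le_normal
  intro a ha
  obtain ⟨α, β, x, y, _, _, _, _, _, _, rfl⟩ := ha
  rw [SetLike.mem_coe, ng_succ_iff]
  exact fun j hj => pComp_faces X (n+1) (n+1) le_rfl _ j hj

/-! ### words of atoms at the top level -/

def FacK (k : ℕ) (a : X.G (n+2)) : Prop :=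
  ∃ γ, (∀ i ∈ γ, k ≤ i) ∧ IsAtomL X (n+2) γ a

def FacEq (k : ℕ) (a : X.G (n+2)) : Prop :=
  ∃ γ, k ∈ γ ∧ (∀ i ∈ γ, k ≤ i) ∧ IsAtomL X (n+2) γ a

lemma facK_split {k : ℕ} {a : X.G (n+2)} (h : FacK X n k a) :
    FacEq X n k a ∨ FacK X n (k+1) a := by
  obtain ⟨γ, hγ1, hγ2⟩ := h
  by_cases hk : k ∈ γ
  · exact Or.inl ⟨γ, hk, hγ1, hγ2⟩
  · refine Or.inr ⟨γ, ?_, hγ2⟩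
    intro i hi
    have h1 := hγ1 i hi
    rcases Nat.eq_or_lt_of_le h1 with h2 | h2
    · exact absurd (h2 ▸ hi) hk
    · omega

lemma facK_inv {k : ℕ} {a : X.G (n+2)} (h : FacK X n k a) : FacK X n k a⁻¹ := by
  obtain ⟨γ, h1, h2⟩ := h
  exact ⟨γ, h1, atom_inv X h2⟩

lemma prod_inv_rev {G : Type} [Group G] : ∀ (L : List G),
    (L.prod)⁻¹ = (L.reverse.map (fun x => x⁻¹)).prod := by
  intro L
  induction L with
  | nil => simp
  | cons a L ih => simp [ih]

/-- the quotient projection -/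
noncomputable def piQ : X.G (n+2) →* (X.G (n+2) ⧸ NN X n) :=
  QuotientGroup.mk' (NN X n)

lemma piQ_eq_one_iff {a : X.G (n+2)} : piQ X n a = 1 ↔ a ∈ NN X n := by
  rw [show (1 : X.G (n+2) ⧸ NN X n) = piQ X n 1 from (map_one _).symm]
  show QuotientGroup.mk' _ a = QuotientGroup.mk' _ 1 ↔ _
  rw [QuotientGroup.mk'_eq_mk']
  constructor
  · rintro ⟨z, hz, hza⟩
    have : a = z⁻¹ := by
      have := congrArg (fun w => w * z⁻¹) hza
      simpa using this
    rw [this]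
    exact inv_mem hz
  · intro ha
    exact ⟨a⁻¹, inv_mem ha, by simp⟩

lemma piQ_eq_one {a : X.G (n+2)} (ha : a ∈ NN X n) : piQ X n a = 1 :=
  (piQ_eq_one_iff X n).mpr ha

lemma mem_of_piQ_eq_one {a : X.G (n+2)} (ha : piQ X n a = 1) : a ∈ NN X n :=
  (piQ_eq_one_iff X n).mp ha

/-- collapse the Peiffer generator factors in the quotient -/
lemma collapse (k : ℕ) : ∀ L : List (X.G (n+2)),
    (∀ a ∈ L, (∃ γ, (∀ i ∈ γ, k ≤ i) ∧ IsAtomL X (n+2) γ a) ∨ PGen X (n+1) a) →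
    ∃ L' : List (X.G (n+2)), (∀ a ∈ L', FacK X n k a) ∧ piQ X n (L.prod) = piQ X n (L'.prod) := by
  intro L
  induction L with
  | nil => exact fun _ => ⟨[], by simp, rfl⟩
  | cons a L₁ ih =>
    intro hL
    obtain ⟨L', hL', hL'e⟩ := ih (fun b hb => hL b (List.mem_cons_of_mem _ hb))
    rcases hL a (List.mem_cons_self) with hfa | hpg
    · exact ⟨a :: L', fun b hb => by
        rcases List.mem_cons.mp hb with rfl | hb
        · exact hfa
        · exact hL' b hb,
        by rw [List.prod_cons, List.prod_cons, map_mul, map_mul, hL'e]⟩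
    · refine ⟨L', hL', ?_⟩
      rw [List.prod_cons, map_mul, piQ_eq_one X n (pgen_mem_NN X n hpg), one_mul, hL'e]

/-- single swap in the quotient -/
lemma swapPi {k : ℕ} {e f : X.G (n+2)} (he : FacEq X n k e) (hf : FacK X n (k+1) f) :
    ∃ Lw : List (X.G (n+2)), (∀ a ∈ Lw, FacK X n (k+1) a) ∧
      piQ X n (f * e) = piQ X n e * piQ X n f * piQ X n (Lw.prod) := by
  obtain ⟨γe, hke, hγe, hae⟩ := he
  obtain ⟨γf, hγf, haf⟩ := hf
  obtain ⟨L, hL, hLe⟩ := CI X (γe.length + γf.length) (n+1) k γe γf e⁻¹ f⁻¹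
    le_rfl (atom_inv X hae) (atom_inv X haf) hke hγe hγf
  obtain ⟨L', hL', hL'e⟩ := collapse X n (k+1) L hL
  refine ⟨L'.reverse.map (fun x => x⁻¹), ?_, ?_⟩
  · intro a ha
    obtain ⟨b, hb, rfl⟩ := List.mem_map.mp ha
    exact facK_inv X n (hL' b (List.mem_reverse.mp hb))
  · have h1 : f * e = e * f * (⁅e⁻¹, f⁻¹⁆)⁻¹ := by
      rw [commutatorElement_def]
      group
    rw [h1, hLe, map_mul, map_mul, map_inv, hL'e, ← map_inv, prod_inv_rev]

/-- move a `(k+1)`-word left past an `=k` atom -/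
lemma moveOne {k : ℕ} : ∀ (Lu : List (X.G (n+2))), (∀ a ∈ Lu, FacK X n (k+1) a) →
    ∀ e, FacEq X n k e → ∃ Lu' : List (X.G (n+2)), (∀ a ∈ Lu', FacK X n (k+1) a) ∧
      piQ X n (Lu.prod * e) = piQ X n (e * Lu'.prod) := by
  intro Lu
  induction Lu with
  | nil => exact fun _ e _ => ⟨[], by simp, by simp⟩
  | cons f Lu₁ ih =>
    intro hLu e he
    obtain ⟨Lu₁', h1, h2⟩ := ih (fun a ha => hLu a (List.mem_cons_of_mem _ ha)) e he
    obtain ⟨Lw, hw1, hw2⟩ := swapPi X n he (hLu f (List.mem_cons_self))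
    refine ⟨f :: (Lw ++ Lu₁'), ?_, ?_⟩
    · intro a ha
      rcases List.mem_cons.mp ha with rfl | ha
      · exact hLu a (List.mem_cons_self)
      · rcases List.mem_append.mp ha with ha | ha
        · exact hw1 a ha
        · exact h1 a ha
    · simp only [List.prod_cons, List.prod_append, map_mul, mul_assoc]
      simp only [map_mul] at h2
      simp only [map_mul, mul_assoc] at hw2
      calc piQ X n f * (piQ X n Lu₁.prod * piQ X n e)
          = piQ X n f * (piQ X n e * piQ X n Lu₁'.prod) := by rw [h2]
        _ = (piQ X n f * piQ X n e) * piQ X n Lu₁'.prod := by rw [mul_assoc]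
        _ = (piQ X n e * (piQ X n f * piQ X n Lw.prod)) * piQ X n Lu₁'.prod := by rw [hw2]
        _ = piQ X n e * (piQ X n f * (piQ X n Lw.prod * piQ X n Lu₁'.prod)) := by
            simp only [mul_assoc]

/-- move a `(k+1)`-word right past a whole `=k` word -/
lemma moveMany {k : ℕ} : ∀ (LE : List (X.G (n+2))), (∀ e ∈ LE, FacEq X n k e) →
    ∀ Lu : List (X.G (n+2)), (∀ a ∈ Lu, FacK X n (k+1) a) →
    ∃ Lu' : List (X.G (n+2)), (∀ a ∈ Lu', FacK X n (k+1) a) ∧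
      piQ X n (Lu.prod * LE.prod) = piQ X n (LE.prod * Lu'.prod) := by
  intro LE
  induction LE with
  | nil => exact fun _ Lu hLu => ⟨Lu, hLu, by simp⟩
  | cons e LE₁ ih =>
    intro hLE Lu hLu
    obtain ⟨Lu₁, h1, h2⟩ := moveOne X n Lu hLu e (hLE e (List.mem_cons_self))
    obtain ⟨Lu₂, h3, h4⟩ := ih (fun a ha => hLE a (List.mem_cons_of_mem _ ha)) Lu₁ h1
    refine ⟨Lu₂, h3, ?_⟩
    simp only [List.prod_cons, map_mul, mul_assoc]
    simp only [map_mul] at h2 h4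
    calc piQ X n Lu.prod * (piQ X n e * piQ X n LE₁.prod)
        = (piQ X n Lu.prod * piQ X n e) * piQ X n LE₁.prod := by rw [mul_assoc]
      _ = (piQ X n e * piQ X n Lu₁.prod) * piQ X n LE₁.prod := by rw [h2]
      _ = piQ X n e * (piQ X n Lu₁.prod * piQ X n LE₁.prod) := by rw [mul_assoc]
      _ = piQ X n e * (piQ X n LE₁.prod * piQ X n Lu₂.prod) := by rw [h4]

/-- sorting: extract the atoms with minimal entry exactly `k` to the left -/
lemma sortK {k : ℕ} : ∀ L : List (X.G (n+2)), (∀ a ∈ L, FacK X n k a) →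
    ∃ LE Lw : List (X.G (n+2)), (∀ e ∈ LE, FacEq X n k e) ∧ (∀ a ∈ Lw, FacK X n (k+1) a) ∧
      piQ X n (L.prod) = piQ X n (LE.prod * Lw.prod) := by
  intro L
  induction L with
  | nil => exact fun _ => ⟨[], [], by simp, by simp, by simp⟩
  | cons a L₁ ih =>
    intro hL
    obtain ⟨LE₁, Lw₁, h1, h2, h3⟩ := ih (fun b hb => hL b (List.mem_cons_of_mem _ hb))
    rcases facK_split X n (hL a (List.mem_cons_self)) with hfa | hfa
    · refine ⟨a :: LE₁, Lw₁, ?_, h2, ?_⟩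
      · intro e he
        rcases List.mem_cons.mp he with rfl | he
        · exact hfa
        · exact h1 e he
      · simp only [List.prod_cons, map_mul, mul_assoc]
        simp only [map_mul] at h3
        rw [h3]
    · obtain ⟨Lu', h4, h5⟩ := moveMany X n LE₁ h1 [a] (by
        intro b hb; rcases List.mem_singleton.mp hb with rfl; exact hfa)
      refine ⟨LE₁, Lu' ++ Lw₁, h1, ?_, ?_⟩
      · intro b hb
        rcases List.mem_append.mp hb with hb | hb
        · exact h4 b hb
        · exact h2 b hb
      · simp only [List.prod_cons, List.prod_nil, mul_one, map_mul] at h5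
        simp only [map_mul] at h3
        simp only [List.prod_cons, List.prod_append, map_mul, mul_assoc]
        calc piQ X n a * piQ X n L₁.prod
            = piQ X n a * (piQ X n LE₁.prod * piQ X n Lw₁.prod) := by rw [h3]
          _ = (piQ X n a * piQ X n LE₁.prod) * piQ X n Lw₁.prod := by rw [mul_assoc]
          _ = (piQ X n LE₁.prod * piQ X n Lu'.prod) * piQ X n Lw₁.prod := by rw [h5]
          _ = piQ X n LE₁.prod * (piQ X n Lu'.prod * piQ X n Lw₁.prod) := by rw [mul_assoc]

end ThmA
namespace ThmA

variable (X : SGrp) (n : ℕ)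

lemma prod_kill {k : ℕ} : ∀ Lw : List (X.G (n+2)), (∀ a ∈ Lw, FacK X n (k+1) a) →
    X.d (n+1) k (Lw.prod) = 1 := by
  intro Lw
  induction Lw with
  | nil => intro _; simp
  | cons a Lw₁ ih =>
    intro h
    obtain ⟨γ, hγ1, hγ2⟩ := h a (List.mem_cons_self)
    rw [List.prod_cons, map_mul, ih (fun b hb => h b (List.mem_cons_of_mem _ hb)),
      atom_kill X hγ2 (fun i hi => by have := hγ1 i hi; omega), one_mul]

lemma retract_prod {k : ℕ} : ∀ LE : List (X.G (n+2)), (∀ e ∈ LE, FacEq X n k e) →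
    X.s (n+1) k (X.d (n+1) k (LE.prod)) = LE.prod := by
  intro LE
  induction LE with
  | nil => simp
  | cons e LE₁ ih =>
    intro h
    obtain ⟨γ, hk, hγ1, hγ2⟩ := h e (List.mem_cons_self)
    rw [List.prod_cons, map_mul, map_mul,
      ih (fun b hb => h b (List.mem_cons_of_mem _ hb)),
      atom_retract X hγ2 hk hγ1]

lemma NN_faces {ν : X.G (n+2)} (hν : ν ∈ NN X n) :
    ∀ j, j ≤ n+1 → X.d (n+1) j ν = 1 := by
  have := NN_le_NG X n hν
  rw [ng_succ_iff] at this
  exact this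

lemma bigEmpty {k : ℕ} (hk : n + 2 ≤ k) {L : List (X.G (n+2))}
    (hL : ∀ a ∈ L, FacK X n k a) : L = [] := by
  apply List.eq_nil_iff_forall_not_mem.mpr
  intro a ha
  obtain ⟨γ, hγ1, hγ2⟩ := hL a ha
  obtain ⟨i, hi⟩ : ∃ i, i ∈ γ := by
    cases γ with
    | nil => exact absurd rfl (atom_ne_nil X hγ2)
    | cons i t => exact ⟨i, List.mem_cons_self⟩
  have := hγ1 i hi
  have := atom_entries X hγ2 i hi
  omega

lemma Vlem : ∀ t k, n + 2 ≤ k + t → ∀ L : List (X.G (n+2)),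
    (∀ a ∈ L, FacK X n k a) →
    (∀ j, j ≤ n+1 → X.d (n+1) j (L.prod) = 1) → L.prod ∈ NN X n := by
  intro t
  induction t with
  | zero =>
    intro k hkt L hL _
    rw [bigEmpty X n (by omega) hL]
    exact one_mem _
  | succ t ih =>
    intro k hkt L hL hfaces
    by_cases hk2 : n + 2 ≤ k
    · rw [bigEmpty X n hk2 hL]
      exact one_mem _
    · have hk1 : k ≤ n + 1 := by omega
      obtain ⟨LE, Lw, h1, h2, h3⟩ := sortK X n L hL
      set u := LE.prod * Lw.prod with hu
      have hν : L.prod * u⁻¹ ∈ NN X n := by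
        apply mem_of_piQ_eq_one
        rw [map_mul, map_inv, h3]
        simp
      set ν := L.prod * u⁻¹ with hνdef
      have hLp : L.prod = ν * u := by rw [hνdef]; group
      have hufaces : ∀ j, j ≤ n+1 → X.d (n+1) j u = 1 := by
        intro j hj
        have : u = ν⁻¹ * L.prod := by rw [hνdef]; group
        rw [this, map_mul, map_inv, NN_faces X n hν j hj, hfaces j hj]
        simp
      have hdLE : X.d (n+1) k (LE.prod) = 1 := by
        have h4 := hufaces k hk1
        rw [hu, map_mul, prod_kill X n Lw h2, mul_one] at h4
        exact h4
      have hLE1 : LE.prod = 1 := by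
        rw [← retract_prod X n LE h1, hdLE, map_one]
      have hLw : L.prod = ν * Lw.prod := by
        rw [hLp, hu, hLE1, one_mul]
      have hLwfaces : ∀ j, j ≤ n+1 → X.d (n+1) j (Lw.prod) = 1 := by
        intro j hj
        have := hufaces j hj
        rwa [hu, hLE1, one_mul] at this
      rw [hLw]
      exact mul_mem hν (ih (k+1) (by omega) Lw h2 hLwfaces)

/-- words of atoms form a subgroup -/
def W0 : Subgroup (X.G (n+2)) where
  carrier := {g | ∃ L : List (X.G (n+2)), (∀ a ∈ L, FacK X n 0 a) ∧ g = L.prod}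
  one_mem' := ⟨[], by simp, rfl⟩
  mul_mem' := by
    rintro a b ⟨La, hLa, rfl⟩ ⟨Lb, hLb, rfl⟩
    refine ⟨La ++ Lb, ?_, List.prod_append.symm⟩
    intro c hc
    rcases List.mem_append.mp hc with hc | hc
    · exact hLa c hc
    · exact hLb c hc
  inv_mem' := by
    rintro a ⟨La, hLa, rfl⟩
    refine ⟨La.reverse.map (fun x => x⁻¹), ?_, prod_inv_rev La⟩
    intro c hc
    obtain ⟨b, hb, rfl⟩ := List.mem_map.mp hc
    exact facK_inv X n (hLa b (List.mem_reverse.mp hb))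

lemma D_le_W0 :
    Subgroup.closure (⋃ i ∈ Finset.range (n+2), Set.range (X.s (n+1) i)) ≤ W0 X n := by
  apply Subgroup.closure_le (W0 X n) |>.mpr
  intro g hg
  simp only [Set.mem_iUnion, Set.mem_range] at hg
  obtain ⟨i, hi, g₀, rfl⟩ := hg
  have hin : i ≤ n + 1 := by
    have := Finset.mem_range.mp hi
    omega
  obtain ⟨L, hLfac, hLe⟩ := decompM X (n+1) 0 g₀ (by intro j hj; omega)
  refine ⟨L.map (X.s (n+1) i), ?_, ?_⟩
  · intro a ha
    obtain ⟨b, hb, rfl⟩ := List.mem_map.mp ha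
    rcases hLfac b hb with hb' | ⟨γ, _, hγ2⟩
    · exact ⟨[i], by simp, IsAtomL.base (n+1) i b hin hb'⟩
    · exact ⟨ins i γ, by simp, atom_wrap X hγ2 hin⟩
  · rw [hLe, ← MonoidHom.map_list_prod]

end ThmA
/-- Theorem A: at each level `N = n + 2 > 1`, with `D_N` the
subgroup generated by the degenerate elements and `N_N` the normal closure of
the Peiffer elements `F_{α,β}(x,y) = p([s_α x, s_β y])` for `(α,β) ∈ P(N)`
(disjoint, `β < α`), `x ∈ NG_{N-#α}`, `y ∈ NG_{N-#β}`, where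
`p = p_{N-1} ∘ ⋯ ∘ p_0`, one has `NG_N ⊓ D_N = N_N ⊓ D_N`. -/
theorem stmt10 (X : SGrp) (n : ℕ) :
    let N := n + 2
    let D : Subgroup (X.G N) :=
      Subgroup.closure (⋃ i ∈ Finset.range N, Set.range (X.s (n+1) i))
    let Nn : Subgroup (X.G N) := Subgroup.normalClosure
      {g : X.G N | ∃ (α β : List ℕ) (x : X.G (N - α.length)) (y : X.G (N - β.length)),
        SIdx N α ∧ SIdx N β ∧ (∀ i ∈ α, i ∉ β) ∧ Slt β α ∧
        x ∈ X.NG (N - α.length) ∧ y ∈ X.NG (N - β.length) ∧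
        g = X.pComp (n+1) (n+1) ⁅X.sMapN N α x, X.sMapN N β y⁆}
    X.NG N ⊓ D = Nn ⊓ D := by
  intro N D Nn
  apply le_antisymm
  · intro z hz
    rw [Subgroup.mem_inf] at hz ⊢
    obtain ⟨hz1, hz2⟩ := hz
    refine ⟨?_, hz2⟩
    obtain ⟨L, hL, hLe⟩ := ThmA.D_le_W0 X n hz2
    rw [hLe]
    refine ThmA.Vlem X n (n+2) 0 (by omega) L hL ?_
    intro j hj
    rw [← hLe]
    exact (ThmA.ng_succ_iff X (n+1) z).mp hz1 j hj
  · intro z hz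
    rw [Subgroup.mem_inf] at hz ⊢
    exact ⟨ThmA.NN_le_NG X n hz.1, hz.2⟩
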